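/- arXiv:2412.16588 — 3 statements merged into one kernel-verified Lean document; each statement's English description precedes it below -/
import Mathlib

section
/- For the same planar polynomial system with λ₁ = −1, λ₂ = 3, the function φ₂(x) = −x₁² + x₂ + 2x₁x₂² − x₂⁴ satisfies ∇φ₂(x)·f(x) = 3φ₂(x) for all x ∈ ℝ². -/
/-- For the same planar polynomial system with λ₁ = −1, λ₂ = 3, the function
φ₂(x) = −x₁² + x₂ + 2x₁x₂² − x₂⁴ satisfies ∇φ₂(x)·f(x) = 3φ₂(x) for all x ∈ ℝ². -/
theorem first_example_principal_eigenfunction_two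
    (f : ℝ × ℝ → ℝ × ℝ)
    (hf : ∀ x : ℝ × ℝ, f x =
      (-2 * 3 * x.2 * (x.1 ^ 2 - x.2 - 2 * x.1 * x.2 ^ 2 + x.2 ^ 4) +
        (-1 : ℝ) * (x.1 + 4 * x.1 ^ 2 * x.2 - x.2 ^ 2 - 8 * x.1 * x.2 ^ 3 + 4 * x.2 ^ 5),
       2 * (-1 : ℝ) * (x.1 - x.2 ^ 2) ^ 2 -
        3 * (x.1 ^ 2 - x.2 - 2 * x.1 * x.2 ^ 2 + x.2 ^ 4)))
    (φ : ℝ × ℝ → ℝ)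
    (hφ : ∀ x : ℝ × ℝ, φ x = -x.1 ^ 2 + x.2 + 2 * x.1 * x.2 ^ 2 - x.2 ^ 4) :
    ∀ x : ℝ × ℝ, fderiv ℝ φ x (f x) = 3 * φ x := by
  have hφ' : φ = fun p : ℝ × ℝ => -(p.1 * p.1) + p.2 + 2 * p.1 * (p.2 * p.2) -
      p.2 * p.2 * (p.2 * p.2) := by
    funext p; rw [hφ]; ring
  subst hφ'
  intro x
  have hx : HasFDerivAt (fun p : ℝ × ℝ => p.1) (ContinuousLinearMap.fst ℝ ℝ ℝ) x :=
    hasFDerivAt_fst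
  have hy : HasFDerivAt (fun p : ℝ × ℝ => p.2) (ContinuousLinearMap.snd ℝ ℝ ℝ) x :=
    hasFDerivAt_snd
  have H := (((hx.mul hx).neg.add hy).add ((hx.const_mul 2).mul (hy.mul hy))).sub
    ((hy.mul hy).mul (hy.mul hy))
  rw [HasFDerivAt.fderiv (f := fun p : ℝ × ℝ => -(p.1 * p.1) + p.2 + 2 * p.1 * (p.2 * p.2) -
      p.2 * p.2 * (p.2 * p.2)) H]
  simp [hf, ContinuousLinearMap.smul_apply, ContinuousLinearMap.add_apply,
    ContinuousLinearMap.sub_apply, ContinuousLinearMap.neg_apply]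
  ring
end

section
/- For the system ẋ₁ = ((7.5x₂² + 5)(x₁³ + x₁ + sin x₂) + (−x₁ + x₂³ + 2x₂)cos x₂)/D(x), ẋ₂ = (2.5x₁³ + 2.5x₁ − (3x₁² + 1)(−x₁ + x₂³ + 2x₂) + 2.5 sin x₂)/D(x), with D(x) = 9x₁²x₂² + 6x₁² + 3x₂² + cos x₂ + 2, the function φ₁(x) = x₁ − 2x₂ − x₂³ satisfies ∇φ₁(x)·f(x) = −φ₁(x) for all x ∈ ℝ². -/
/-- For the second analytical example, φ₁(x) = x₁ − 2x₂ − x₂³ satisfies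
∇φ₁(x)·f(x) = −φ₁(x) for all x ∈ ℝ². -/
theorem second_example_principal_eigenfunction_one
    (D : ℝ × ℝ → ℝ)
    (hD : ∀ x : ℝ × ℝ, D x =
      9 * x.1 ^ 2 * x.2 ^ 2 + 6 * x.1 ^ 2 + 3 * x.2 ^ 2 + Real.cos x.2 + 2)
    (f : ℝ × ℝ → ℝ × ℝ)
    (hf : ∀ x : ℝ × ℝ, f x =
      (((7.5 * x.2 ^ 2 + 5) * (x.1 ^ 3 + x.1 + Real.sin x.2) +
          (-x.1 + x.2 ^ 3 + 2 * x.2) * Real.cos x.2) / D x,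
       (2.5 * x.1 ^ 3 + 2.5 * x.1 -
          (3 * x.1 ^ 2 + 1) * (-x.1 + x.2 ^ 3 + 2 * x.2) + 2.5 * Real.sin x.2) / D x))
    (φ : ℝ × ℝ → ℝ)
    (hφ : ∀ x : ℝ × ℝ, φ x = x.1 - 2 * x.2 - x.2 ^ 3) :
    ∀ x : ℝ × ℝ, fderiv ℝ φ x (f x) = -1 * φ x := by
  have hφ' : φ = fun p : ℝ × ℝ => p.1 - 2 * p.2 - p.2 ^ 3 := funext hφ
  intro x
  have hDpos : 0 < D x := by
    rw [hD]
    nlinarith [Real.neg_one_le_cos x.2, sq_nonneg x.1, sq_nonneg x.2,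
      sq_nonneg (x.1 * x.2)]
  have hDne : D x ≠ 0 := ne_of_gt hDpos
  have hder : HasFDerivAt φ
      ((ContinuousLinearMap.fst ℝ ℝ ℝ) -
        ((2 : ℝ) • (ContinuousLinearMap.snd ℝ ℝ ℝ) +
          ((3 : ℝ) * x.2 ^ 2) • (ContinuousLinearMap.snd ℝ ℝ ℝ))) x := by
    rw [hφ']
    have h1 : HasFDerivAt (fun p : ℝ × ℝ => p.1) (ContinuousLinearMap.fst ℝ ℝ ℝ) x :=
      hasFDerivAt_fst
    have h2 : HasFDerivAt (fun p : ℝ × ℝ => p.2) (ContinuousLinearMap.snd ℝ ℝ ℝ) x :=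
      hasFDerivAt_snd
    have h3 := (h2.const_mul (2 : ℝ))
    have h4 := h2.mul (h2.mul h2)
    have := (h1.sub h3).sub h4
    have heq : (fun p : ℝ × ℝ => p.1 - 2 * p.2 - p.2 ^ 3)
        = fun p : ℝ × ℝ => p.1 - 2 * p.2 - p.2 * (p.2 * p.2) := by
      funext p; ring
    rw [heq]
    refine this.congr_fderiv ?_
    ext v <;> simp <;> ring
  rw [hder.fderiv]
  rw [hφ, hf]
  simp only [ContinuousLinearMap.sub_apply, ContinuousLinearMap.add_apply,
    ContinuousLinearMap.smul_apply, ContinuousLinearMap.coe_fst',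
    ContinuousLinearMap.coe_snd', smul_eq_mul]
  rw [hD] at hDne ⊢
  field_simp
  rw [div_eq_iff (by contrapose! hDne; linarith)]
  ring
end

section
/- For the same system, the function φ₂(x) = x₁ + sin(x₂) + x₁³ satisfies ∇φ₂(x)·f(x) = 2.5·φ₂(x) for all x ∈ ℝ². -/
/-- For the second analytical example, φ₂(x) = x₁ + sin(x₂) + x₁³ satisfies
∇φ₂(x)·f(x) = 2.5·φ₂(x) for all x ∈ ℝ². -/
theorem second_example_principal_eigenfunction_two
    (D : ℝ × ℝ → ℝ)
    (hD : ∀ x : ℝ × ℝ, D x =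
      9 * x.1 ^ 2 * x.2 ^ 2 + 6 * x.1 ^ 2 + 3 * x.2 ^ 2 + Real.cos x.2 + 2)
    (f : ℝ × ℝ → ℝ × ℝ)
    (hf : ∀ x : ℝ × ℝ, f x =
      (((7.5 * x.2 ^ 2 + 5) * (x.1 ^ 3 + x.1 + Real.sin x.2) +
          (-x.1 + x.2 ^ 3 + 2 * x.2) * Real.cos x.2) / D x,
       (2.5 * x.1 ^ 3 + 2.5 * x.1 -
          (3 * x.1 ^ 2 + 1) * (-x.1 + x.2 ^ 3 + 2 * x.2) + 2.5 * Real.sin x.2) / D x))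
    (φ : ℝ × ℝ → ℝ)
    (hφ : ∀ x : ℝ × ℝ, φ x = x.1 + Real.sin x.2 + x.1 ^ 3) :
    ∀ x : ℝ × ℝ, fderiv ℝ φ x (f x) = 2.5 * φ x := by
  have hfun : φ = fun p : ℝ × ℝ => p.1 + Real.sin p.2 + p.1 ^ 3 := funext hφ
  subst hfun
  intro x
  have h1 : HasFDerivAt (fun p : ℝ × ℝ => p.1)
      (ContinuousLinearMap.fst ℝ ℝ ℝ) x := hasFDerivAt_fst
  have h2 : HasFDerivAt (fun p : ℝ × ℝ => p.2)
      (ContinuousLinearMap.snd ℝ ℝ ℝ) x := hasFDerivAt_snd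
  have hsin : HasFDerivAt (fun p : ℝ × ℝ => Real.sin p.2)
      (Real.cos x.2 • ContinuousLinearMap.snd ℝ ℝ ℝ) x :=
    (Real.hasDerivAt_sin x.2).comp_hasFDerivAt x h2
  have hcube : HasFDerivAt (fun p : ℝ × ℝ => p.1 ^ 3)
      ((3 * x.1 ^ 2) • ContinuousLinearMap.fst ℝ ℝ ℝ) x := by
    simpa [Function.comp_def] using (hasDerivAt_pow 3 x.1).comp_hasFDerivAt x h1
  have htot := (h1.add hsin).add hcube
  rw [show fderiv ℝ (fun p : ℝ × ℝ => p.1 + Real.sin p.2 + p.1 ^ 3) x = _ from htot.fderiv]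
  have hDpos : D x ≠ 0 := by
    have h := Real.neg_one_le_cos x.2
    have : (0:ℝ) < D x := by
      rw [hD x]; nlinarith [sq_nonneg x.1, sq_nonneg x.2, sq_nonneg (x.1 * x.2)]
    exact ne_of_gt this
  simp only [hf x, ContinuousLinearMap.add_apply, ContinuousLinearMap.smul_apply,
    ContinuousLinearMap.coe_fst', ContinuousLinearMap.coe_snd', smul_eq_mul]
  rw [hD x] at hDpos ⊢
  field_simp
  linear_combination (2.5 * (x.1 + Real.sin x.2 + x.1 ^ 3)) * mul_inv_cancel₀ hDpos
end
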